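/- Let p : Fin N → ℝ be nonnegative with ∑ⱼ pⱼ = 1, let L : Fin N → ℝ, let L_M > 0 with 0 ≤ Lⱼ ≤ L_M for all j, and let 0 < c ≤ 1. Define P₁ = ∑ⱼ pⱼ sin²(π/4 − c/2 + c Lⱼ / L_M). Then |P₁ − (1−c)/2 − (c/L_M) 𝔼[L]| ≤ (2/3)(c/2)³, where 𝔼[L] = ∑ⱼ pⱼ Lⱼ. -/

import Mathlib

lemma sub_sin_le_cube {x : ℝ} (hx : 0 ≤ x) : x - Real.sin x ≤ x ^ 3 / 6 := by
  have key : ∀ y ∈ Set.Ici (0:ℝ), 0 ≤ Real.sin y - y + y ^ 3 / 6 := by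
    have hmono : MonotoneOn (fun y : ℝ => Real.sin y - y + y ^ 3 / 6) (Set.Ici 0) := by
      apply monotoneOn_of_deriv_nonneg (convex_Ici 0)
      · fun_prop
      · fun_prop
      · intro y hy
        have hd : HasDerivAt (fun y : ℝ => Real.sin y - y + y ^ 3 / 6)
            (Real.cos y - 1 + y ^ 2 / 2) y := by
          have h1 := ((Real.hasDerivAt_sin y).sub (hasDerivAt_id y)).add
            ((hasDerivAt_pow 3 y).div_const 6)
          refine h1.congr_deriv ?_
          simp
          ring
        rw [hd.deriv]
        have := Real.one_sub_sq_div_two_le_cos (x := y)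
        linarith
    intro y hy
    have := hmono (by simp : (0:ℝ) ∈ Set.Ici 0) hy (by simpa using hy)
    simpa using this
  have := key x (by simpa using hx)
  linarith

lemma abs_sin_sub_le_cube (x : ℝ) : |Real.sin x - x| ≤ |x| ^ 3 / 6 := by
  rcases le_or_gt 0 x with hx | hx
  · rw [abs_of_nonneg hx, abs_sub_comm, abs_of_nonneg (by linarith [Real.sin_le hx])]
    exact sub_sin_le_cube hx
  · have hx' : 0 ≤ -x := by linarith
    have := sub_sin_le_cube hx'
    rw [Real.sin_neg] at this
    rw [abs_of_neg hx, abs_of_nonneg (by linarith [Real.le_sin hx.le])]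
    nlinarith

theorem expected_loss_encoding (N : ℕ) (p : Fin N → ℝ) (hp : ∀ j, 0 ≤ p j)
    (hsum : ∑ j, p j = 1) (L : Fin N → ℝ) (L_M : ℝ) (hLM : 0 < L_M)
    (hL : ∀ j, 0 ≤ L j ∧ L j ≤ L_M) (c : ℝ) (hc : 0 < c) (hc1 : c ≤ 1) :
    |(∑ j, p j * Real.sin (Real.pi / 4 - c / 2 + c * L j / L_M) ^ 2) -
        (1 - c) / 2 - (c / L_M) * ∑ j, p j * L j| ≤ (2 / 3) * (c / 2) ^ 3 := by
  set h : Fin N → ℝ := fun j => -c / 2 + c * L j / L_M with hh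
  have hsin : ∀ j, Real.sin (Real.pi / 4 - c / 2 + c * L j / L_M) ^ 2
      = 1 / 2 + Real.sin (2 * h j) / 2 := by
    intro j
    rw [Real.sin_sq_eq_half_sub]
    have : 2 * (Real.pi / 4 - c / 2 + c * L j / L_M) = Real.pi / 2 + 2 * h j := by
      rw [hh]; ring
    rw [this, Real.cos_add, Real.cos_pi_div_two, Real.sin_pi_div_two]
    ring
  have key : (∑ j, p j * Real.sin (Real.pi / 4 - c / 2 + c * L j / L_M) ^ 2) -
      (1 - c) / 2 - (c / L_M) * ∑ j, p j * L j
      = ∑ j, p j * ((Real.sin (2 * h j) - 2 * h j) / 2) := by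
    simp_rw [hsin]
    rw [Finset.mul_sum]
    have e1 : (1 - c) / 2 = ∑ j, p j * ((1 - c) / 2) := by
      rw [← Finset.sum_mul, hsum, one_mul]
    rw [e1, ← Finset.sum_sub_distrib, ← Finset.sum_sub_distrib]
    apply Finset.sum_congr rfl
    intro x _
    simp only [hh]
    ring
  rw [key]
  have habs : ∀ j, |h j| ≤ c / 2 := by
    intro j
    obtain ⟨h0, h1⟩ := hL j
    have hq0 : 0 ≤ c * L j / L_M := by positivity
    have hq1 : c * L j / L_M ≤ c := by
      rw [div_le_iff₀ hLM]
      nlinarith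
    rw [hh, abs_le]
    constructor <;> simp <;> linarith
  calc |∑ j, p j * ((Real.sin (2 * h j) - 2 * h j) / 2)|
      ≤ ∑ j, |p j * ((Real.sin (2 * h j) - 2 * h j) / 2)| :=
        Finset.abs_sum_le_sum_abs _ _
    _ ≤ ∑ j, p j * ((2 / 3) * (c / 2) ^ 3) := by
        apply Finset.sum_le_sum
        intro j _
        rw [abs_mul, abs_of_nonneg (hp j)]
        apply mul_le_mul_of_nonneg_left _ (hp j)
        have := abs_sin_sub_le_cube (2 * h j)
        have h2 : |2 * h j| ≤ c := by
          rw [abs_mul, abs_two]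
          linarith [habs j]
        have h3 : |2 * h j| ^ 3 ≤ c ^ 3 := by
          apply pow_le_pow_left₀ (abs_nonneg _) h2
        rw [abs_div, abs_two]
        rw [div_le_iff₀ (by norm_num : (0:ℝ) < 2)]
        calc |Real.sin (2 * h j) - 2 * h j| ≤ |2 * h j| ^ 3 / 6 := this
          _ ≤ c ^ 3 / 6 := by linarith
          _ = 2 / 3 * (c / 2) ^ 3 * 2 := by ring
    _ = (2 / 3) * (c / 2) ^ 3 := by rw [← Finset.sum_mul, hsum, one_mul]
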